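/- In the Laurent polynomial ring Z[t_1^{±1},...,t_n^{±1}], for each 1 ≤ i ≤ n the intersection of the principal ideal generated by (t_i^p−1)/(t_i−1) with the subring Z[t_1^{±p},...,t_n^{±p}] equals the ideal of Z[t_1^{±p},...,t_n^{±p}] generated by t_i^p − 1. Consequently, Z[t_1^{±p},...,t_n^{±p}] ∩ U_1·Z[t_1^{±1},...,t_n^{±1}] = (U_1·δ)·Z[t_1^{±p},...,t_n^{±p}], where U_1 = ∏_i (t_i^p−1)/(t_i−1) and δ = ∏_i (t_i−1). -/

import Mathlib

set_option maxHeartbeats 1000000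

open AddMonoidAlgebra Finsupp

namespace Stmt17Aux


variable {n : ℕ}

noncomputable abbrev E (i : Fin n) (k : ℤ) : AddMonoidAlgebra ℤ (Fin n → ℤ) :=
  AddMonoidAlgebra.single (k • Pi.single i (1:ℤ)) 1

lemma E_mul (i : Fin n) (k l : ℤ) : E i k * E i l = E i (k + l) := by
  rw [E, E, E, AddMonoidAlgebra.single_mul_single, add_smul, mul_one]

lemma E_zero (i : Fin n) : E i 0 = 1 := by
  rw [E, zero_smul, ← AddMonoidAlgebra.one_def]

lemma E_pow (i : Fin n) (a : ℕ) : E i 1 ^ a = E i (a : ℤ) := by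
  induction a with
  | zero => simpa using (E_zero i).symm
  | succ a ih => rw [pow_succ, ih, E_mul]; norm_num

lemma exists_geom (i : Fin n) (d : ℤ) (m : ℤ) : ∃ q : AddMonoidAlgebra ℤ (Fin n → ℤ),
    E i (d * m) = (E i d - 1) * q + 1 ∧
    ∀ v ∈ q.coeff.support, ∃ m' : ℤ, v = (d * m') • Pi.single i (1:ℤ) := by
  classical
  induction m using Int.induction_on with
  | zero => exact ⟨0, by rw [mul_zero, E_zero]; ring, by simp⟩
  | succ m ih =>
    obtain ⟨q, hq, hs⟩ := ih
    refine ⟨q * E i d + 1, ?_, ?_⟩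
    · have h1 : E i (d * (m + 1)) = E i (d * m) * E i d := by rw [E_mul]; ring_nf
      rw [h1, hq]; ring
    · intro v hv
      rcases Finset.mem_union.mp (Finsupp.support_add (by rwa [AddMonoidAlgebra.coeff_add] at hv)) with h | h
      · obtain ⟨y, hy, z, hz, hyz⟩ := Finset.mem_add.mp (AddMonoidAlgebra.support_coeff_mul_subset _ _ h)
        obtain ⟨m', hm'⟩ := hs y hy
        have hz' : z = d • Pi.single i (1:ℤ) := by
          have := Finsupp.support_single_subset hz
          simpa using this
        exact ⟨m' + 1, by rw [← hyz, hm', hz']; rw [mul_add, mul_one, add_smul]⟩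
      · have : v = 0 := by
          have := (by simpa [AddMonoidAlgebra.one_def] using h : v = 0)
          simpa using this
        exact ⟨0, by rw [this, mul_zero, zero_smul]⟩
  | pred m ih =>
    obtain ⟨q, hq, hs⟩ := ih
    refine ⟨(q - 1) * E i (-d), ?_, ?_⟩
    · have h1 : E i (d * (-m - 1)) = E i (d * -m) * E i (-d) := by rw [E_mul]; ring_nf
      have h2 : E i d * E i (-d) = 1 := by rw [E_mul]; simpa using E_zero i
      rw [h1, hq]; linear_combination h2
    · intro v hv
      obtain ⟨y, hy, z, hz, hyz⟩ := Finset.mem_add.mp (AddMonoidAlgebra.support_coeff_mul_subset _ _ hv)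
      have hz' : z = (-d) • Pi.single i (1:ℤ) := by
        have := Finsupp.support_single_subset hz
        simpa using this
      rcases Finset.mem_union.mp (Finsupp.support_sub (by rwa [AddMonoidAlgebra.coeff_sub] at hy)) with h | h
      · obtain ⟨m', hm'⟩ := hs y h
        exact ⟨m' - 1, by rw [← hyz, hm', hz', ← add_smul]; ring_nf⟩
      · have : y = 0 := by
          have := (by simpa [AddMonoidAlgebra.one_def] using h : y = 0)
          simpa using this
        exact ⟨-1, by rw [← hyz, this, hz', zero_add]; ring_nf⟩




lemma update_eq_add (u : Fin n → ℤ) (i : Fin n) (k : ℤ) :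
    Function.update u i 0 + k • Pi.single i (1:ℤ) = Function.update u i k := by
  funext j
  by_cases h : j = i
  · subst h; simp
  · simp [Function.update_apply, h, Pi.single_apply]

lemma decomp (i : Fin n) (d : ℤ) (x : AddMonoidAlgebra ℤ (Fin n → ℤ))
    (hx : ∀ v ∈ x.coeff.support, d ∣ v i) :
    ∃ b c : AddMonoidAlgebra ℤ (Fin n → ℤ), x = (E i d - 1) * b + c ∧
      (∀ v ∈ b.coeff.support, ∃ u ∈ x.coeff.support, ∃ m : ℤ, v = Function.update u i (d * m)) ∧
      (∀ v ∈ c.coeff.support, ∃ u ∈ x.coeff.support, v = Function.update u i 0) := by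
  classical
  induction x using AddMonoidAlgebra.induction with
  | zero => exact ⟨0, 0, by simp, by simp, by simp⟩
  | single_add u a f hu ha IH =>
    have hsupp : (AddMonoidAlgebra.single u a + f).coeff.support = {u} ∪ f.coeff.support := by
      rw [AddMonoidAlgebra.coeff_add, AddMonoidAlgebra.coeff_single, Finsupp.support_add_eq, Finsupp.support_single_ne_zero u ha]
      rw [Finsupp.support_single_ne_zero u ha]
      simpa using hu
    have hxf : ∀ v ∈ f.coeff.support, d ∣ v i := fun v hv =>
      hx v (by rw [hsupp]; exact Finset.mem_union_right _ hv)
    have humem : u ∈ (AddMonoidAlgebra.single u a + f).coeff.support := by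
      rw [hsupp]; exact Finset.mem_union_left _ (Finset.mem_singleton_self u)
    obtain ⟨m, hm⟩ := hx u humem
    obtain ⟨bf, cf, heq, hbf, hcf⟩ := IH hxf
    obtain ⟨q, hq, hqs⟩ := exists_geom i d m
    have hsing : AddMonoidAlgebra.single u a =
        AddMonoidAlgebra.single (Function.update u i 0) a * E i (d * m) := by
      rw [E, AddMonoidAlgebra.single_mul_single, mul_one]
      congr 1
      rw [update_eq_add, ← hm]
      funext j
      by_cases h : j = i
      · subst h; simp
      · simp [Function.update_apply, h]
    refine ⟨AddMonoidAlgebra.single (Function.update u i 0) a * q + bf,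
            AddMonoidAlgebra.single (Function.update u i 0) a + cf, ?_, ?_, ?_⟩
    · rw [hsing, hq, heq]; ring
    · intro v hv
      rcases Finset.mem_union.mp (Finsupp.support_add (by rwa [AddMonoidAlgebra.coeff_add] at hv)) with h | h
      · obtain ⟨y, hy, z, hz, hyz⟩ := Finset.mem_add.mp (AddMonoidAlgebra.support_coeff_mul_subset _ _ h)
        have hy' : y = Function.update u i 0 := by
          have := Finsupp.support_single_subset hy; simpa using this
        obtain ⟨m', hm'⟩ := hqs z hz
        refine ⟨u, humem, m', ?_⟩
        rw [← hyz, hy', hm', update_eq_add]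
      · obtain ⟨u', hu', m', hm'⟩ := hbf v h
        exact ⟨u', by rw [hsupp]; exact Finset.mem_union_right _ hu', m', hm'⟩
    · intro v hv
      rcases Finset.mem_union.mp (Finsupp.support_add (by rwa [AddMonoidAlgebra.coeff_add] at hv)) with h | h
      · have : v = Function.update u i 0 := by
          have := Finsupp.support_single_subset h; simpa using this
        exact ⟨u, humem, this⟩
      · obtain ⟨u', hu', hm'⟩ := hcf v h
        exact ⟨u', by rw [hsupp]; exact Finset.mem_union_right _ hu', hm'⟩




lemma coeff_phi_mul (p : ℕ) (i : Fin n) (y : AddMonoidAlgebra ℤ (Fin n → ℤ))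
    (w : Fin n → ℤ) :
    ((∑ a ∈ Finset.range p, E i (a:ℤ)) * y).coeff w
      = ∑ a ∈ Finset.range p, y.coeff (-((a:ℤ) • Pi.single i (1:ℤ)) + w) := by
  rw [Finset.sum_mul, AddMonoidAlgebra.coeff_sum, Finsupp.finset_sum_apply]
  refine Finset.sum_congr rfl fun a _ => ?_
  rw [E, AddMonoidAlgebra.coeff_single_mul_apply, one_mul]

lemma smul_single_apply (k : ℤ) (i j : Fin n) :
    ((k • Pi.single i (1:ℤ) : Fin n → ℤ)) j = if j = i then k else 0 := by
  by_cases h : j = i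
  · subst h; simp
  · simp [h, Pi.single_apply]

lemma phi_mul_eq_zero (p : ℕ) (hp2 : 2 ≤ p) (i : Fin n)
    (y : AddMonoidAlgebra ℤ (Fin n → ℤ))
    (h : ∀ v ∈ ((∑ a ∈ Finset.range p, E i (a:ℤ)) * y).coeff.support, v i = 0) :
    (∑ a ∈ Finset.range p, E i (a:ℤ)) * y = 0 := by
  classical
  by_contra hne
  have hy : y ≠ 0 := fun h0 => hne (by rw [h0, mul_zero])
  have hS : (y.coeff.support.image fun v => v i).Nonempty :=
    (Finsupp.support_nonempty_iff.mpr (AddMonoidAlgebra.coeff_eq_zero.not.mpr hy)).image _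
  obtain ⟨v₀, hv₀, hv₀i⟩ := Finset.mem_image.mp ((y.coeff.support.image fun v => v i).max'_mem hS)
  obtain ⟨v₁, hv₁, hv₁i⟩ := Finset.mem_image.mp ((y.coeff.support.image fun v => v i).min'_mem hS)
  have hle : ∀ v ∈ y.coeff.support, v i ≤ v₀ i := fun v hv => by
    rw [hv₀i]
    exact Finset.le_max' (y.coeff.support.image fun v => v i) (v i) (Finset.mem_image_of_mem _ hv)
  have hge : ∀ v ∈ y.coeff.support, v₁ i ≤ v i := fun v hv => by
    rw [hv₁i]
    exact Finset.min'_le (y.coeff.support.image fun v => v i) (v i) (Finset.mem_image_of_mem _ hv)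
  have h10 : v₁ i ≤ v₀ i := hge _ hv₀
  clear hv₀i hv₁i hS
  by_cases hcase : v₀ i + ((p:ℤ) - 1) = 0
  · -- min argument
    have hcoeff : ((∑ a ∈ Finset.range p, E i (a:ℤ)) * y).coeff v₁ = y.coeff v₁ := by
      rw [coeff_phi_mul, Finset.sum_eq_single 0]
      · simp
      · intro a ha hane
        apply Finsupp.notMem_support_iff.mp
        intro hmem
        have h2 := hge _ hmem
        simp only [Pi.add_apply, Pi.neg_apply, smul_single_apply, eq_self_iff_true, if_true] at h2
        omega
      · intro h0; exact absurd (Finset.mem_range.mpr (by omega)) h0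
    have hmem : v₁ ∈ ((∑ a ∈ Finset.range p, E i (a:ℤ)) * y).coeff.support := by
      rw [Finsupp.mem_support_iff, hcoeff]
      exact Finsupp.mem_support_iff.mp hv₁
    have h3 := h v₁ hmem
    omega
  · -- max argument
    have hcoeff : ((∑ a ∈ Finset.range p, E i (a:ℤ)) * y).coeff
        (v₀ + ((p:ℤ) - 1) • Pi.single i (1:ℤ)) = y.coeff v₀ := by
      rw [coeff_phi_mul, Finset.sum_eq_single (p - 1)]
      · congr 1
        funext j
        simp only [Pi.add_apply, Pi.neg_apply, smul_single_apply]
        have hc : ((p - 1 : ℕ) : ℤ) = (p:ℤ) - 1 := by omega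
        by_cases hj : j = i
        · subst hj; rw [if_pos rfl, if_pos rfl, hc]; ring
        · simp [hj]
      · intro a ha hane
        apply Finsupp.notMem_support_iff.mp
        intro hmem
        have h2 := hle _ hmem
        have ha' := Finset.mem_range.mp ha
        simp only [Pi.add_apply, Pi.neg_apply, smul_single_apply, eq_self_iff_true, if_true] at h2
        omega
      · intro h0; exact absurd (Finset.mem_range.mpr (by omega)) h0
    have hmem : v₀ + ((p:ℤ) - 1) • Pi.single i (1:ℤ)
        ∈ ((∑ a ∈ Finset.range p, E i (a:ℤ)) * y).coeff.support := by
      rw [Finsupp.mem_support_iff, hcoeff]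
      exact Finsupp.mem_support_iff.mp hv₀
    have hwi := h _ hmem
    simp only [Pi.add_apply, smul_single_apply, eq_self_iff_true, if_true] at hwi
    exact hcase hwi




-- Key lemma: from divisibility by the geometric sum to divisibility by E i p - 1
lemma key (p : ℕ) (hp2 : 2 ≤ p) (i : Fin n) (x y : AddMonoidAlgebra ℤ (Fin n → ℤ))
    (hx : ∀ v ∈ x.coeff.support, (p:ℤ) ∣ v i)
    (hxy : x = (∑ a ∈ Finset.range p, E i (a:ℤ)) * y) :
    ∃ b, x = (E i (p:ℤ) - 1) * b ∧
      ∀ v ∈ b.coeff.support, ∃ u ∈ x.coeff.support, ∃ m : ℤ, v = Function.update u i ((p:ℤ) * m) := by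
  obtain ⟨b, c, heq, hb, hc⟩ := decomp i (p:ℤ) x hx
  have hgeom : (∑ a ∈ Finset.range p, E i (a:ℤ)) * (E i 1 - 1) = E i (p:ℤ) - 1 := by
    have := geom_sum_mul (E i 1) p
    simp only [E_pow] at this
    exact this
  have hc' : c = (∑ a ∈ Finset.range p, E i (a:ℤ)) * (y - (E i 1 - 1) * b) := by
    linear_combination hxy - heq + b * hgeom
  have hczero : c = 0 := by
    rw [hc']
    apply phi_mul_eq_zero p hp2 i
    intro v hv
    rw [← hc'] at hv
    obtain ⟨u, _, hu⟩ := hc v hv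
    rw [hu, Function.update_self]
  refine ⟨b, by rw [heq, hczero, add_zero], hb⟩

-- epsilon: the ring hom sending t_i to 1
noncomputable def zhom (i : Fin n) : (Fin n → ℤ) →+ (Fin n → ℤ) where
  toFun v := v - v i • Pi.single i 1
  map_zero' := by simp
  map_add' v w := by
    simp only [Pi.add_apply, add_smul]
    abel

noncomputable def eps (i : Fin n) :
    AddMonoidAlgebra ℤ (Fin n → ℤ) →+* AddMonoidAlgebra ℤ (Fin n → ℤ) :=
  AddMonoidAlgebra.mapDomainRingHom ℤ (zhom i)

lemma eps_apply (i : Fin n) (x : AddMonoidAlgebra ℤ (Fin n → ℤ)) :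
    eps i x = AddMonoidAlgebra.mapDomain (zhom i) x := rfl

lemma eps_single (i : Fin n) (v : Fin n → ℤ) (a : ℤ) :
    eps i (AddMonoidAlgebra.single v a)
      = AddMonoidAlgebra.single (v - v i • Pi.single i 1) a := by
  rw [eps_apply]
  exact AddMonoidAlgebra.mapDomain_single

lemma eps_E_self (i : Fin n) (k : ℤ) : eps i (E i k) = 1 := by
  rw [E, eps_single]
  have : ((k • Pi.single i (1:ℤ) : Fin n → ℤ)) i = k := by simp
  rw [this]
  simp [AddMonoidAlgebra.one_def]

lemma eps_E_ne (i j : Fin n) (hij : j ≠ i) (k : ℤ) : eps j (E i k) = E i k := by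
  rw [E, eps_single]
  have : ((k • Pi.single i (1:ℤ) : Fin n → ℤ)) j = 0 := by
    simp [Pi.single_apply, hij.symm, fun h : i = j => hij h.symm]
  rw [this, zero_smul, sub_zero]

lemma eps_fixed (i : Fin n) (c : AddMonoidAlgebra ℤ (Fin n → ℤ))
    (h : ∀ v ∈ c.coeff.support, v i = 0) : eps i c = c := by
  rw [eps_apply]
  apply AddMonoidAlgebra.coeff_injective
  show Finsupp.mapDomain (zhom i) c.coeff = c.coeff
  have : Finsupp.mapDomain (zhom i) c.coeff = Finsupp.mapDomain id c.coeff := by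
    apply Finsupp.mapDomain_congr
    intro v hv
    show v - v i • Pi.single i 1 = v
    rw [h v hv, zero_smul, sub_zero]
  rw [this, Finsupp.mapDomain_id]

lemma eps_zero_dvd (i : Fin n) (w : AddMonoidAlgebra ℤ (Fin n → ℤ))
    (h : eps i w = 0) : ∃ q, w = (E i 1 - 1) * q := by
  obtain ⟨b, c, heq, _, hc⟩ := decomp i 1 w (fun v _ => one_dvd _)
  have hcz : c = 0 := by
    have h2 : eps i w = eps i (E i 1 - 1) * eps i b + eps i c := by
      rw [heq]; simp
    rw [h, map_sub, map_one, eps_E_self, sub_self, zero_mul, zero_add] at h2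
    rw [eps_fixed i c (fun v hv => by obtain ⟨u, _, hu⟩ := hc v hv; rw [hu, Function.update_self])] at h2
    exact h2.symm
  exact ⟨b, by rw [heq, hcz, add_zero]⟩

lemma E_sub_one_ne (i : Fin n) : E i 1 - 1 ≠ 0 := by
  intro h0
  have h1 : (E i 1 - 1).coeff (Pi.single i 1) = 1 := by
    rw [E, one_smul, AddMonoidAlgebra.coeff_sub, Finsupp.sub_apply, AddMonoidAlgebra.one_def, AddMonoidAlgebra.coeff_single, AddMonoidAlgebra.coeff_single]
    rw [Finsupp.single_eq_same]
    have : (0 : Fin n → ℤ) ≠ Pi.single i 1 := by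
      intro h
      have := congrFun h i
      simp at this
    rw [Finsupp.single_eq_of_ne' this]
    ring
  rw [h0] at h1
  simp at h1

lemma prod_dvd (s : Finset (Fin n)) : ∀ w : AddMonoidAlgebra ℤ (Fin n → ℤ),
    (∀ i ∈ s, eps i w = 0) → ∃ q, w = (∏ i ∈ s, (E i 1 - 1)) * q := by
  classical
  induction s using Finset.induction with
  | empty => exact fun w _ => ⟨w, by simp⟩
  | insert i s' hi IH =>
    intro w hw
    obtain ⟨q₁, hq₁⟩ := eps_zero_dvd i w (hw i (Finset.mem_insert_self i s'))
    have hq₁' : ∀ j ∈ s', eps j q₁ = 0 := by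
      intro j hj
      have hji : j ≠ i := fun h => hi (h ▸ hj)
      have h0 := hw j (Finset.mem_insert_of_mem hj)
      rw [hq₁, map_mul, map_sub, map_one] at h0
      rw [show eps j (E i 1) = E i 1 from eps_E_ne i j hji 1] at h0
      rcases mul_eq_zero.mp h0 with h | h
      · exact absurd h (E_sub_one_ne i)
      · exact h
    obtain ⟨q, hq⟩ := IH q₁ hq₁'
    refine ⟨q, ?_⟩
    rw [hq₁, hq, Finset.prod_insert hi]
    ring



lemma psi_apply (p : ℕ) (ψ : AddMonoidAlgebra ℤ (Fin n → ℤ) →+* AddMonoidAlgebra ℤ (Fin n → ℤ))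
    (hψ : ∀ (a : Fin n → ℤ) (b : ℤ),
      ψ (AddMonoidAlgebra.single a b) = AddMonoidAlgebra.single (p • a) b)
    (x : AddMonoidAlgebra ℤ (Fin n → ℤ)) :
    ψ x = AddMonoidAlgebra.mapDomain (fun v : Fin n → ℤ => p • v) x := by
  induction x using AddMonoidAlgebra.induction with
  | zero => rw [map_zero, AddMonoidAlgebra.mapDomain_zero]
  | single_add u a f hu ha IH =>
    rw [map_add, IH, AddMonoidAlgebra.mapDomain_add, AddMonoidAlgebra.mapDomain_single]
    congr 1
    rw [hψ]

lemma psi_injective (p : ℕ) (hp : p ≠ 0)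
    (ψ : AddMonoidAlgebra ℤ (Fin n → ℤ) →+* AddMonoidAlgebra ℤ (Fin n → ℤ))
    (hψ : ∀ (a : Fin n → ℤ) (b : ℤ),
      ψ (AddMonoidAlgebra.single a b) = AddMonoidAlgebra.single (p • a) b) :
    Function.Injective ψ := by
  have hinj : Function.Injective (fun v : Fin n → ℤ => p • v) := by
    intro u v huv
    funext j
    have := congrFun huv j
    simp only [Pi.smul_apply, nsmul_eq_mul] at this
    exact mul_left_cancel₀ (by exact_mod_cast hp) this
  intro x y hxy
  rw [psi_apply p ψ hψ x, psi_apply p ψ hψ y] at hxy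
  exact AddMonoidAlgebra.mapDomain_injective hinj hxy

lemma mem_range_dvd (p : ℕ)
    (ψ : AddMonoidAlgebra ℤ (Fin n → ℤ) →+* AddMonoidAlgebra ℤ (Fin n → ℤ))
    (hψ : ∀ (a : Fin n → ℤ) (b : ℤ),
      ψ (AddMonoidAlgebra.single a b) = AddMonoidAlgebra.single (p • a) b)
    (x : AddMonoidAlgebra ℤ (Fin n → ℤ)) (hx : x ∈ ψ.range) :
    ∀ v ∈ x.coeff.support, ∀ j, (p:ℤ) ∣ v j := by
  classical
  obtain ⟨w, rfl⟩ := hx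
  rw [psi_apply p ψ hψ w]
  intro v hv j
  obtain ⟨u, _, rfl⟩ := Finset.mem_image.mp (Finsupp.mapDomain_support (show v ∈ (Finsupp.mapDomain (fun v : Fin n → ℤ => p • v) w.coeff).support from hv))
  refine ⟨u j, ?_⟩
  simp [nsmul_eq_mul]

lemma dvd_mem_range (p : ℕ) (hp : p ≠ 0)
    (ψ : AddMonoidAlgebra ℤ (Fin n → ℤ) →+* AddMonoidAlgebra ℤ (Fin n → ℤ))
    (hψ : ∀ (a : Fin n → ℤ) (b : ℤ),
      ψ (AddMonoidAlgebra.single a b) = AddMonoidAlgebra.single (p • a) b)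
    (x : AddMonoidAlgebra ℤ (Fin n → ℤ)) (hx : ∀ v ∈ x.coeff.support, ∀ j, (p:ℤ) ∣ v j) :
    x ∈ ψ.range := by
  classical
  induction x using AddMonoidAlgebra.induction with
  | zero => exact ⟨0, map_zero ψ⟩
  | single_add u a f hu ha IH =>
    by_cases haz : a = 0
    · exact absurd haz ha
    have hsupp : (AddMonoidAlgebra.single u a + f).coeff.support = {u} ∪ f.coeff.support := by
      rw [AddMonoidAlgebra.coeff_add, AddMonoidAlgebra.coeff_single, Finsupp.support_add_eq, Finsupp.support_single_ne_zero u haz]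
      rw [Finsupp.support_single_ne_zero u haz]
      simpa using hu
    have humem : u ∈ (AddMonoidAlgebra.single u a + f).coeff.support := by
      rw [hsupp]; exact Finset.mem_union_left _ (Finset.mem_singleton_self u)
    have hxf : ∀ v ∈ f.coeff.support, ∀ j, (p:ℤ) ∣ v j := fun v hv =>
      hx v (by rw [hsupp]; exact Finset.mem_union_right _ hv)
    obtain ⟨wf, hwf⟩ := IH hxf
    refine ⟨AddMonoidAlgebra.single (fun j => u j / p) a + wf, ?_⟩
    rw [map_add, hψ, hwf]
    congr 1
    have : p • (fun j => u j / p) = u := by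
      funext j
      obtain ⟨m, hm⟩ := hx u humem j
      rw [Pi.smul_apply, hm]
      rw [Int.mul_ediv_cancel_left m (by exact_mod_cast hp)]
      simp [nsmul_eq_mul]
    rw [this]


end Stmt17Aux
/-- In `ℤ[t_1^{±1},...,t_n^{±1}]` (realized as
`AddMonoidAlgebra ℤ (Fin n → ℤ)`), with `ψ` the ring endomorphism `t_i ↦ t_i^p`
(whose range is the subring `ℤ[t_1^{±p},...,t_n^{±p}]`):
for each `i` the intersection of the principal ideal generated by
`(t_i^p-1)/(t_i-1) = 1 + t_i + ... + t_i^{p-1}` with `ℤ[t_1^{±p},...,t_n^{±p}]`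
equals the ideal of `ℤ[t^{±p}]` generated by `t_i^p - 1`; consequently
`ℤ[t^{±p}] ∩ U_1·ℤ[t^{±1}] = (U_1·δ)·ℤ[t^{±p}]` where `U_1 = ∏ (t_i^p-1)/(t_i-1)`
and `δ = ∏ (t_i - 1)`. -/
theorem stmt_17 (p : ℕ) (hp : p.Prime) (n : ℕ) (hn : 1 ≤ n)
    (ψ : AddMonoidAlgebra ℤ (Fin n → ℤ) →+* AddMonoidAlgebra ℤ (Fin n → ℤ))
    (hψ : ∀ (a : Fin n → ℤ) (b : ℤ),
      ψ (AddMonoidAlgebra.single a b) = AddMonoidAlgebra.single (p • a) b)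
    (t : Fin n → AddMonoidAlgebra ℤ (Fin n → ℤ))
    (ht : ∀ i, t i = AddMonoidAlgebra.single (Pi.single i 1) 1) :
    (∀ i : Fin n, ∀ x,
        (x ∈ ψ.range ∧ ∃ y, x = (∑ a ∈ Finset.range p, t i ^ a) * y) ↔
          ∃ z ∈ ψ.range, x = (t i ^ p - 1) * z) ∧
    (∀ x, (x ∈ ψ.range ∧ ∃ y, x = (∏ i, ∑ a ∈ Finset.range p, t i ^ a) * y) ↔
        ∃ z ∈ ψ.range,
          x = ((∏ i, ∑ a ∈ Finset.range p, t i ^ a) * ∏ i, (t i - 1)) * z) := by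
  classical
  open Stmt17Aux in
  have hp2 : 2 ≤ p := hp.two_le
  have hp0 : p ≠ 0 := by omega
  have htE : ∀ i, t i = E i 1 := by
    intro i; rw [ht i, E, one_smul]
  have htpow : ∀ (i : Fin n) (a : ℕ), t i ^ a = E i (a : ℤ) := by
    intro i a; rw [htE i, E_pow]
  have hPhi : ∀ i : Fin n, (∑ a ∈ Finset.range p, t i ^ a)
      = ∑ a ∈ Finset.range p, E i (a:ℤ) :=
    fun i => Finset.sum_congr rfl fun a _ => htpow i a
  have hpsiE : ∀ i : Fin n, ψ (E i 1) = E i (p:ℤ) := by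
    intro i
    rw [E, one_smul, hψ, E]
    congr 1
  have hpsit : ∀ i : Fin n, ψ (t i - 1) = E i (p:ℤ) - 1 := by
    intro i
    rw [map_sub, map_one, htE i, hpsiE i]
  constructor
  · -- part 1
    intro i x
    constructor
    · rintro ⟨hxr, y, hxy⟩
      have hx := mem_range_dvd p ψ hψ x hxr
      have hxy' : x = (∑ a ∈ Finset.range p, E i (a:ℤ)) * y := by
        rw [← hPhi i]; exact hxy
      obtain ⟨b, hb, hbs⟩ := key p hp2 i x y (fun v hv => hx v hv i) hxy'
      have hbr : b ∈ ψ.range := by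
        apply dvd_mem_range p hp0 ψ hψ b
        intro v hv j
        obtain ⟨u, hu, m, hm⟩ := hbs v hv
        by_cases hj : j = i
        · subst hj; rw [hm, Function.update_self]; exact ⟨m, rfl⟩
        · rw [hm, Function.update_of_ne hj]; exact hx u hu j
      exact ⟨b, hbr, by rw [htpow i p]; exact hb⟩
    · rintro ⟨z, hzr, hxe⟩
      obtain ⟨z', rfl⟩ := RingHom.mem_range.mp hzr
      constructor
      · refine RingHom.mem_range.mpr ⟨(t i - 1) * z', ?_⟩
        rw [map_mul, hpsit i, ← htpow i p]
        exact hxe.symm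
      · exact ⟨(t i - 1) * (ψ z'), by
          linear_combination hxe - (ψ z') * geom_sum_mul (t i) p⟩
  · -- part 2
    intro x
    constructor
    · rintro ⟨hxr, y, hxy⟩
      obtain ⟨w, rfl⟩ := RingHom.mem_range.mp hxr
      have hall := mem_range_dvd p ψ hψ (ψ w) (RingHom.mem_range.mpr ⟨w, rfl⟩)
      have hepsw : ∀ i : Fin n, eps i w = 0 := by
        intro i
        rw [← Finset.mul_prod_erase Finset.univ _ (Finset.mem_univ i)] at hxy
        have hxy_i : ψ w = (∑ a ∈ Finset.range p, E i (a:ℤ))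
            * ((∏ j ∈ Finset.univ.erase i, ∑ a ∈ Finset.range p, t j ^ a) * y) := by
          rw [← hPhi i, ← mul_assoc]; exact hxy
        obtain ⟨b, hb, hbs⟩ := key p hp2 i (ψ w) _ (fun v hv => hall v hv i) hxy_i
        have hbr : b ∈ ψ.range := by
          apply dvd_mem_range p hp0 ψ hψ b
          intro v hv j
          obtain ⟨u, hu, m, hm⟩ := hbs v hv
          by_cases hj : j = i
          · subst hj; rw [hm, Function.update_self]; exact ⟨m, rfl⟩
          · rw [hm, Function.update_of_ne hj]; exact hall u hu j
        obtain ⟨wi, hwi⟩ := RingHom.mem_range.mp hbr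
        have hww : ψ w = ψ ((E i 1 - 1) * wi) := by
          rw [map_mul, map_sub, map_one, hpsiE i, hwi]
          exact hb
        have hw_eq := psi_injective p hp0 ψ hψ hww
        rw [hw_eq, map_mul, map_sub, map_one, eps_E_self]
        ring
      obtain ⟨q, hq⟩ := prod_dvd Finset.univ w (fun i _ => hepsw i)
      refine ⟨ψ q, RingHom.mem_range.mpr ⟨q, rfl⟩, ?_⟩
      have h1 : ψ w = (∏ i, (E i (p:ℤ) - 1)) * ψ q := by
        rw [hq, map_mul]
        congr 1
        rw [map_prod]
        exact Finset.prod_congr rfl fun i _ => by rw [map_sub, map_one, hpsiE i]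
      have h2 : (∏ i, (∑ a ∈ Finset.range p, t i ^ a)) * (∏ i, (t i - 1))
          = ∏ i, (E i (p:ℤ) - 1) := by
        rw [← Finset.prod_mul_distrib]
        exact Finset.prod_congr rfl fun i _ => by rw [geom_sum_mul, htpow i p]
      rw [h2]; exact h1
    · rintro ⟨z, hzr, hxe⟩
      obtain ⟨z', rfl⟩ := RingHom.mem_range.mp hzr
      constructor
      · refine RingHom.mem_range.mpr ⟨(∏ i, (t i - 1)) * z', ?_⟩
        rw [map_mul, map_prod]
        have hstep : ∀ i : Fin n, ψ (t i - 1)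
            = (∑ a ∈ Finset.range p, t i ^ a) * (t i - 1) := by
          intro i
          rw [hpsit i, ← htpow i p, geom_sum_mul]
        rw [Finset.prod_congr rfl fun i _ => hstep i, Finset.prod_mul_distrib]
        rw [hxe]
      · exact ⟨(∏ i, (t i - 1)) * ψ z', by rw [hxe]; ring⟩
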